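/- Fix N ∈ ℕ, N ≥ 1, and C > 0. There exists a constant M = M(N, C) such that: for every N-times continuously differentiable g : [0,1] → ℝ with |g(t)| ≤ 1 for all t ∈ [0,1] and |g^{(N)}(t)| ≤ C for all t ∈ [0,1], one has |g^{(j)}(0)| ≤ M for all 0 ≤ j < N. -/

import Mathlib

open Set
open scoped Nat

noncomputable def evalMap (N : ℕ) : (Fin N → ℝ) →ₗ[ℝ] C(Set.Icc (0:ℝ) 1, ℝ) where
  toFun a := ⟨fun t => ∑ j : Fin N, a j * (t : ℝ) ^ (j : ℕ), by
    exact continuous_finset_sum _ fun j _ =>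
      continuous_const.mul (continuous_subtype_val.pow _)⟩
  map_add' a b := by
    ext t
    simp [add_mul, Finset.sum_add_distrib]
  map_smul' c a := by
    ext t
    simp [Finset.mul_sum, mul_assoc]

lemma evalMap_inj (N : ℕ) : Function.Injective (evalMap N) := by
  rw [← LinearMap.ker_eq_bot, LinearMap.ker_eq_bot']
  intro a ha
  set p : Polynomial ℝ := ∑ j : Fin N, Polynomial.monomial (j : ℕ) (a j) with hp
  have hroot : {x | p.IsRoot x}.Infinite := by
    apply Set.Infinite.mono ?_ (Set.Icc_infinite (a := (0:ℝ)) (b := 1) (by norm_num))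
    intro x hx
    have := congrArg (fun f => (f ⟨x, hx⟩ : ℝ)) ha
    simp only [evalMap, LinearMap.coe_mk, AddHom.coe_mk, ContinuousMap.coe_mk,
      ContinuousMap.zero_apply] at this
    simp [Polynomial.IsRoot, hp, Polynomial.eval_finset_sum, this]
  have hp0 : p = 0 := Polynomial.eq_zero_of_infinite_isRoot p hroot
  funext i
  have : p.coeff i = a i := by
    rw [hp]
    rw [Polynomial.finset_sum_coeff]
    rw [Finset.sum_eq_single i]
    · simp
    · intro j _ hj
      rw [Polynomial.coeff_monomial]
      rw [if_neg (by simpa [Fin.val_eq_val] using hj)]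
    · simp
  rw [hp0] at this
  simpa using this.symm

theorem stmt9 (N : ℕ) (hN : 1 ≤ N) (C : ℝ) (hC : 0 < C) :
    ∃ M : ℝ, ∀ g : ℝ → ℝ, ContDiffOn ℝ N g (Set.Icc (0:ℝ) 1) →
      (∀ t ∈ Set.Icc (0:ℝ) 1, |g t| ≤ 1) →
      (∀ t ∈ Set.Icc (0:ℝ) 1, |iteratedDerivWithin N g (Set.Icc (0:ℝ) 1) t| ≤ C) →
      ∀ j < N, |iteratedDerivWithin j g (Set.Icc (0:ℝ) 1) 0| ≤ M := by
  obtain ⟨n, rfl⟩ : ∃ n, N = n + 1 := ⟨N - 1, (Nat.succ_pred_eq_of_pos hN).symm⟩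
  set L := evalMap (n + 1) with hL
  have hinj := evalMap_inj (n + 1)
  set e := LinearEquiv.ofInjective L hinj with he
  letI : NormedSpace ℝ (LinearMap.range L) := Submodule.normedSpace (LinearMap.range L)
  letI : SeminormedAddCommGroup (LinearMap.range L →L[ℝ] (Fin (n + 1) → ℝ)) :=
    @ContinuousLinearMap.toSeminormedAddCommGroup ℝ ℝ (LinearMap.range L) (Fin (n + 1) → ℝ) _ _ _ _
      (Submodule.normedSpace _) _ (RingHom.id ℝ) _
  let f : LinearMap.range L →L[ℝ] (Fin (n + 1) → ℝ) :=
    LinearMap.toContinuousLinearMap e.symm.toLinearMap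
  set K := ‖f‖ with hK
  refine ⟨((n + 1)! : ℝ) * (K * (1 + C)), ?_⟩
  intro g hg hg1 hgC j hj
  set a' : ℕ → ℝ := fun k => iteratedDerivWithin k g (Set.Icc (0:ℝ) 1) 0 / (k)! with ha'
  set a : Fin (n + 1) → ℝ := fun k => a' (k : ℕ) with ha
  have hLa : ∀ t : Set.Icc (0:ℝ) 1,
      (L a) t = taylorWithinEval g n (Set.Icc (0:ℝ) 1) 0 (t : ℝ) := by
    intro t
    rw [taylor_within_apply]
    simp only [hL, evalMap, LinearMap.coe_mk, AddHom.coe_mk, ContinuousMap.coe_mk]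
    rw [Fin.sum_univ_eq_sum_range (fun k => a' k * (t : ℝ) ^ k)]
    apply Finset.sum_congr rfl
    intro k _
    simp only [ha', smul_eq_mul, sub_zero, div_eq_mul_inv]
    ring
  have hbound : ‖L a‖ ≤ 1 + C := by
    rw [ContinuousMap.norm_le _ (by positivity)]
    intro t
    rw [hLa]
    have ht := t.2
    have hrem := taylor_mean_remainder_bound (f := g) (a := (0:ℝ)) (b := 1) (n := n)
      (by norm_num) (by exact_mod_cast hg) ht (fun y hy => by simpa using hgC y hy)
    have h1 : ‖g (t : ℝ) - taylorWithinEval g n (Set.Icc (0:ℝ) 1) 0 (t : ℝ)‖ ≤ C := by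
      refine hrem.trans ?_
      have h2 : ((t : ℝ) - 0) ^ (n + 1) ≤ 1 := by
        rw [sub_zero]; exact pow_le_one₀ ht.1 ht.2
      have h4 : (1:ℝ) ≤ (n.factorial : ℝ) := by
        exact_mod_cast Nat.one_le_iff_ne_zero.mpr (Nat.factorial_ne_zero _)
      calc C * ((t : ℝ) - 0) ^ (n + 1) / (n.factorial : ℝ) ≤ C * 1 / 1 :=
            div_le_div₀ (by positivity) (mul_le_mul_of_nonneg_left h2 hC.le) one_pos h4
        _ = C := by ring
    calc ‖taylorWithinEval g n (Set.Icc (0:ℝ) 1) 0 (t : ℝ)‖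
        = ‖g (t : ℝ) - (g (t : ℝ) - taylorWithinEval g n (Set.Icc (0:ℝ) 1) 0 (t : ℝ))‖ := by
          congr 1; ring
      _ ≤ ‖g (t : ℝ)‖ + ‖g (t : ℝ) - taylorWithinEval g n (Set.Icc (0:ℝ) 1) 0 (t : ℝ)‖ :=
          norm_sub_le _ _
      _ ≤ 1 + C := add_le_add (hg1 _ ht) h1
  have hanorm : ‖a‖ ≤ K * (1 + C) := by
    have hfa : f ⟨L a, LinearMap.mem_range_self L a⟩ = a := by
      have : (⟨L a, LinearMap.mem_range_self L a⟩ : LinearMap.range L) = e a := by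
        ext; rw [he, LinearEquiv.ofInjective_apply]
      rw [this]
      simp [f]
    calc ‖a‖ = ‖f ⟨L a, LinearMap.mem_range_self L a⟩‖ := by rw [hfa]
      _ ≤ K * ‖(⟨L a, LinearMap.mem_range_self L a⟩ : LinearMap.range L)‖ :=
          @ContinuousLinearMap.le_opNorm ℝ ℝ (LinearMap.range L) (Fin (n + 1) → ℝ) _ _ _ _
            (Submodule.normedSpace _) _ (RingHom.id ℝ) _ f _
      _ ≤ K * (1 + C) := by
          apply mul_le_mul_of_nonneg_left _ (norm_nonneg f)
          simpa using hbound
  have hj' : j < n + 1 := hj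
  have hja : |iteratedDerivWithin j g (Set.Icc (0:ℝ) 1) 0| = ((j)! : ℝ) * |a ⟨j, hj'⟩| := by
    simp only [ha, ha']
    rw [abs_div, abs_of_nonneg (by positivity : (0:ℝ) ≤ ((j : ℕ)! : ℝ))]
    field_simp
  rw [hja]
  calc ((j)! : ℝ) * |a ⟨j, hj'⟩| ≤ ((n + 1)! : ℝ) * ‖a‖ := by
        apply mul_le_mul _ (norm_le_pi_norm a ⟨j, hj'⟩) (abs_nonneg _) (by positivity)
        exact_mod_cast Nat.factorial_le hj'.le
    _ ≤ ((n + 1)! : ℝ) * (K * (1 + C)) := mul_le_mul_of_nonneg_left hanorm (by positivity)
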